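/- Let j ≥ 2 and ℓ ≥ 2 be integers and let T'_{j,ℓ} be the graph obtained from the complete j-ary tree T_{j,ℓ} by adding j new vertices w_1, …, w_j, each joined by an edge to every leaf of T_{j,ℓ}. Then for the root v of T_{j,ℓ} and every integer δ ≥ 0, the propagating estimator satisfies k̂_δ(v) = k(v) = j. -/

import Mathlib

open SimpleGraph

variable {V : Type*}

/-- The degree of `u` inside the subgraph of `G` induced on the vertex set `S`. -/
noncomputable def degIn (G : SimpleGraph V) (S : Set V) (u : V) : ℕ :=
  {w ∈ S | G.Adj u w}.ncard

/-- `v` belongs to the `k`-core of `G`: there is a vertex set containing `v` all of whose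
vertices have degree at least `k` within the induced subgraph. -/
def inCore (G : SimpleGraph V) (k : ℕ) (v : V) : Prop :=
  ∃ S : Set V, v ∈ S ∧ ∀ u ∈ S, k ≤ degIn G S u

/-- The core number of `v`: the largest `k` such that `v` belongs to the `k`-core of `G`. -/
noncomputable def coreNumber (G : SimpleGraph V) (v : V) : ℕ :=
  sSup {k | inCore G k v}

/-- Degree of a vertex. -/
noncomputable def deg (G : SimpleGraph V) (v : V) : ℕ :=
  (G.neighborSet v).ncard

/-- The `δ`-neighborhood of `v`: all vertices at shortest-path distance at most `δ` from `v`. -/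
def ball (G : SimpleGraph V) (v : V) (δ : ℕ) : Set V :=
  {u | G.Reachable v u ∧ G.dist v u ≤ δ}

/-- The induced estimator `k̆_δ(v)`: the core number of `v` in `G[N_δ(v)]`. -/
noncomputable def kBreve (G : SimpleGraph V) (v : V) (δ : ℕ) : ℕ :=
  coreNumber (G.induce (_root_.ball G v δ)) ⟨v, Reachable.refl v, by rw [SimpleGraph.dist_self]; exact Nat.zero_le _⟩

/-- Neighborhood of `v` as a `Finset`. -/
noncomputable def nbhd (G : SimpleGraph V) [Finite V] (v : V) : Finset V :=
  (G.neighborSet v).toFinite.toFinset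

/-- The propagating estimator `k̂_δ(v)`: `k̂_0(v) = d(v)`, and `k̂_δ(v)` is the max over
`1 ≤ i ≤ d(v)` of `min (k̂_{δ-1}(u_i)) (d(v) - i + 1)`, where `u_1, …, u_{d(v)}` are the
neighbors of `v` listed with `k̂_{δ-1}`-values nondecreasing.  In the formalization the
sorted list `l` of the neighbors' `k̂_{δ-1}`-values is indexed from `0`, so entry `i` of `l`
is `k̂_{δ-1}(u_{i+1})` and `d(v) - i = d(v) - (i+1) + 1`. -/
noncomputable def kHat (G : SimpleGraph V) [Finite V] : ℕ → V → ℕ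
  | 0, v => deg G v
  | δ + 1, v =>
    let l : List ℕ := Multiset.sort ((nbhd G v).val.map (kHat G δ)) (· ≤ ·)
    (Finset.range l.length).sup fun i => min (l.getD i 0) (deg G v - i)



/-- The complete `j`-ary tree with `ℓ` levels.  A vertex at level `i` (for `1 ≤ i ≤ ℓ`) is a
list of length `i - 1` over `Fin j` recording the path of child-choices from the root `[]`;
two vertices are adjacent iff one is obtained from the other by prepending one child-choice. -/
def Tjl (j ℓ : ℕ) : SimpleGraph {l : List (Fin j) // l.length < ℓ} where
  Adj x y := (∃ c : Fin j, (y : List (Fin j)) = c :: (x : List (Fin j)))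
    ∨ (∃ c : Fin j, (x : List (Fin j)) = c :: (y : List (Fin j)))
  symm := ⟨fun _ _ h => Or.symm h⟩
  loopless := ⟨by
    rintro x (⟨c, hc⟩ | ⟨c, hc⟩) <;>
      · have := congrArg List.length hc
        simp at this⟩

instance (j ℓ : ℕ) : Finite {l : List (Fin j) // l.length < ℓ} :=
  (List.finite_length_lt (Fin j) ℓ).to_subtype

/-- The root of `Tjl j ℓ`. -/
def root (j ℓ : ℕ) (h : 0 < ℓ) : {l : List (Fin j) // l.length < ℓ} :=
  ⟨[], by simpa using h⟩

/-- `T'_{j,ℓ}`: the complete `j`-ary tree with `ℓ` levels together with `j` extra vertices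
`w_1, …, w_j` (the `Sum.inr` vertices), each adjacent to every leaf (level-`ℓ` vertex) of the
tree. -/
def Tjl' (j ℓ : ℕ) : SimpleGraph ({l : List (Fin j) // l.length < ℓ} ⊕ Fin j) where
  Adj x y :=
    match x, y with
    | Sum.inl a, Sum.inl b => (Tjl j ℓ).Adj a b
    | Sum.inl a, Sum.inr _ => a.val.length = ℓ - 1
    | Sum.inr _, Sum.inl b => b.val.length = ℓ - 1
    | Sum.inr _, Sum.inr _ => False
  symm := ⟨by
    rintro (a | a) (b | b) h
    · exact h.symm
    · exact h
    · exact h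
    · exact h⟩
  loopless := ⟨by
    rintro (a | a) h
    · exact (Tjl j ℓ).irrefl h
    · exact h⟩

lemma deg_eq_card (G : SimpleGraph V) [Finite V] (v : V) :
    deg G v = (nbhd G v).card := by
  exact Set.ncard_eq_toFinset_card _ _

lemma mem_nbhd {G : SimpleGraph V} [Finite V] {v u : V} :
    u ∈ nbhd G v ↔ G.Adj v u := by
  simp [nbhd]

lemma root_nbhd (j ℓ : ℕ) (hℓ : 2 ≤ ℓ) :
    (Tjl' j ℓ).neighborSet (Sum.inl (root j ℓ (by omega))) =
      Set.range (fun c : Fin j => (Sum.inl ⟨[c], by simp; omega⟩ :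
        ({l : List (Fin j) // l.length < ℓ} ⊕ Fin j))) := by
  ext x
  cases x with
  | inl b =>
    simp only [SimpleGraph.mem_neighborSet, Set.mem_range]
    constructor
    · rintro (⟨c, hc⟩ | ⟨c, hc⟩)
      · exact ⟨c, by simp [Sum.inl.injEq, Subtype.ext_iff, root, hc]⟩
      · simp [root] at hc
    · rintro ⟨c, hc⟩
      have h2 : (⟨[c], by simp; omega⟩ : {l : List (Fin j) // l.length < ℓ}) = b := by
        simpa using hc
      exact Or.inl ⟨c, by rw [← h2]; rfl⟩
  | inr w =>
    simp only [SimpleGraph.mem_neighborSet, Set.mem_range]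
    constructor
    · intro h
      exfalso
      have : ([] : List (Fin j)).length = ℓ - 1 := h
      simp at this; omega
    · rintro ⟨c, hc⟩; simp at hc

lemma deg_root (j ℓ : ℕ) (hℓ : 2 ≤ ℓ) :
    deg (Tjl' j ℓ) (Sum.inl (root j ℓ (by omega))) = j := by
  have hinj : Function.Injective (fun c : Fin j => (Sum.inl ⟨[c], by simp; omega⟩ :
      ({l : List (Fin j) // l.length < ℓ} ⊕ Fin j))) := by
    intro a b hab
    simpa [Subtype.ext_iff] using hab
  rw [deg, root_nbhd j ℓ hℓ, ← Set.image_univ,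
    Set.ncard_image_of_injective _ hinj, Set.ncard_univ]
  simp

lemma deg_ge (j ℓ : ℕ) (hj : 2 ≤ j) (hℓ : 2 ≤ ℓ)
    (u : ({l : List (Fin j) // l.length < ℓ} ⊕ Fin j)) :
    j ≤ deg (Tjl' j ℓ) u := by
  rw [deg_eq_card]
  -- build an injection from Fin j into the neighborhood
  obtain ⟨f, hf_adj, hf_inj⟩ :
      ∃ f : Fin j → ({l : List (Fin j) // l.length < ℓ} ⊕ Fin j),
        (∀ c, (Tjl' j ℓ).Adj u (f c)) ∧ Function.Injective f := by
    cases u with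
    | inl a =>
      by_cases hlen : a.val.length + 1 < ℓ
      · refine ⟨fun c => Sum.inl ⟨c :: a.val, by simpa using hlen⟩, fun c => ?_, ?_⟩
        · exact Or.inl ⟨c, rfl⟩
        · intro x y hxy
          simpa [Subtype.ext_iff] using hxy
      · have hend : a.val.length = ℓ - 1 := by have := a.2; omega
        refine ⟨fun c => Sum.inr c, fun c => hend, ?_⟩
        intro x y hxy; simpa using hxy
    | inr w =>
      refine ⟨fun c => Sum.inl ⟨c :: List.replicate (ℓ - 2) (⟨0, by omega⟩ : Fin j),
        by simp; omega⟩, fun c => ?_, ?_⟩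
      · show (c :: List.replicate (ℓ - 2) (⟨0, by omega⟩ : Fin j)).length = ℓ - 1
        simp; omega
      · intro x y hxy
        simpa [Subtype.ext_iff] using hxy
  calc j = (Finset.univ : Finset (Fin j)).card := by simp
    _ ≤ (nbhd (Tjl' j ℓ) u).card := by
        apply Finset.card_le_card_of_injOn f
        · intro c _
          exact mem_nbhd.2 (hf_adj c)
        · exact hf_inj.injOn

lemma kHat_ge (j ℓ : ℕ) (hj : 2 ≤ j) (hℓ : 2 ≤ ℓ) (δ : ℕ)
    (u : ({l : List (Fin j) // l.length < ℓ} ⊕ Fin j)) :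
    j ≤ kHat (Tjl' j ℓ) δ u := by
  induction δ generalizing u with
  | zero => exact deg_ge j ℓ hj hℓ u
  | succ δ ih =>
    show j ≤ (Finset.range _).sup _
    set G := Tjl' j ℓ
    set l : List ℕ := Multiset.sort ((nbhd G u).val.map (kHat G δ)) (· ≤ ·) with hl
    have hlen : l.length = deg G u := by
      rw [hl, Multiset.length_sort, Multiset.card_map, deg_eq_card]
      rfl
    have hdeg : j ≤ deg G u := deg_ge j ℓ hj hℓ u
    have hpos : 0 < l.length := by rw [hlen]; omega
    refine le_trans ?_ (Finset.le_sup (Finset.mem_range.2 hpos) (f := fun i => min (l.getD i 0) (deg G u - i)))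
    have h0 : l.getD 0 0 ∈ l := by
      rw [List.getD_eq_getElem l 0 hpos]
      exact List.getElem_mem hpos
    have h0' : j ≤ l.getD 0 0 := by
      have := (Multiset.mem_sort (α := ℕ) (r := (· ≤ ·))).1 h0
      obtain ⟨w, hw, hwe⟩ := Multiset.mem_map.1 this
      rw [← hwe]; exact ih w
    simp only [le_inf_iff]
    exact ⟨h0', by omega⟩

/-- in `T'_{j,ℓ}` (`j, ℓ ≥ 2`), for the root `v` of the underlying tree and
every `δ ≥ 0`, the propagating estimator satisfies `k̂_δ(v) = k(v) = j`. -/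
theorem stmt17 (j ℓ : ℕ) (hj : 2 ≤ j) (hℓ : 2 ≤ ℓ) (δ : ℕ) :
    kHat (Tjl' j ℓ) δ (Sum.inl (root j ℓ (by omega))) = j ∧
    coreNumber (Tjl' j ℓ) (Sum.inl (root j ℓ (by omega))) = j := by
  set G := Tjl' j ℓ
  set v : ({l : List (Fin j) // l.length < ℓ} ⊕ Fin j) := Sum.inl (root j ℓ (by omega))
  have hdegv : deg G v = j := deg_root j ℓ hℓ
  constructor
  · -- kHat
    cases δ with
    | zero => exact hdegv
    | succ δ =>
      refine le_antisymm ?_ (kHat_ge j ℓ hj hℓ _ v)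
      show (Finset.range _).sup _ ≤ j
      apply Finset.sup_le
      intro i _
      exact le_trans (min_le_right _ _) (by omega)
  · -- coreNumber
    have hmem : inCore G j v := by
      refine ⟨Set.univ, Set.mem_univ _, fun u _ => ?_⟩
      have : degIn G Set.univ u = deg G u := by
        unfold degIn deg
        congr 1
        ext w
        simp [SimpleGraph.mem_neighborSet]
      rw [this]
      exact deg_ge j ℓ hj hℓ u
    have hub : ∀ k ∈ {k | inCore G k v}, k ≤ j := by
      rintro k ⟨S, hvS, hS⟩
      have h1 : k ≤ degIn G S v := hS v hvS
      have h2 : degIn G S v ≤ deg G v := by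
        unfold degIn deg
        apply Set.ncard_le_ncard
        · intro w hw
          exact hw.2
        · exact Set.toFinite _
      omega
    exact le_antisymm (csSup_le ⟨j, hmem⟩ hub)
      (le_csSup ⟨j, hub⟩ hmem)
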